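/- For L, T > 0 and any track speeds S_r, S_l ∈ ℝ, there exists a global minimizer (ẋ*, ẏ*, θ̇*) ∈ ℝ³ of (ẋ, ẏ, θ̇) ↦ D(ẋ, ẏ, θ̇, S_r, S_l) with ẋ* = (S_r + S_l)/2 and ẏ* = 0; i.e., the predicted forward velocity equals the average of the track speeds and the predicted lateral velocity is zero. -/

import Mathlib

open MeasureTheory

/-- Flat-ground power dissipation function of a tracked vehicle. -/
noncomputable def flatD (L T W : ℝ) (xd yd td Sr Sl : ℝ) : ℝ :=
  (∫ ry in (-T)..T, ∫ rx in (-L)..L,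
    Real.sqrt ((xd + (W - ry) * td - Sr) ^ 2 + (yd + rx * td) ^ 2)) +
  (∫ ly in (-T)..T, ∫ lx in (-L)..L,
    Real.sqrt ((xd - (W + ly) * td - Sl) ^ 2 + (yd + lx * td) ^ 2))

namespace FlatDAux

open intervalIntegral

lemma sqrt_tri (x y z w : ℝ) :
    Real.sqrt ((x + y) ^ 2 + (z + w) ^ 2)
      ≤ Real.sqrt (x ^ 2 + z ^ 2) + Real.sqrt (y ^ 2 + w ^ 2) := by
  have h := norm_add_le (⟨x, z⟩ : ℂ) ⟨y, w⟩
  simpa [Complex.norm_def, Complex.normSq_apply, Complex.normSq_mk, Complex.add_re, Complex.add_im, sq] using h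

lemma sqrt_half (x z : ℝ) :
    Real.sqrt ((x / 2) ^ 2 + (z / 2) ^ 2) = Real.sqrt (x ^ 2 + z ^ 2) / 2 := by
  rw [show (x / 2) ^ 2 + (z / 2) ^ 2 = (x ^ 2 + z ^ 2) * (1 / 4) by ring,
    Real.sqrt_mul (by positivity), show (1 / 4 : ℝ) = (1 / 2) ^ 2 by norm_num,
    Real.sqrt_sq (by norm_num)]
  ring

lemma sqrt_mid (x y z w : ℝ) :
    Real.sqrt (((x + y) / 2) ^ 2 + ((z + w) / 2) ^ 2)
      ≤ (Real.sqrt (x ^ 2 + z ^ 2) + Real.sqrt (y ^ 2 + w ^ 2)) / 2 := by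
  have h := sqrt_tri (x / 2) (y / 2) (z / 2) (w / 2)
  rw [sqrt_half, sqrt_half, show x / 2 + y / 2 = (x + y) / 2 by ring,
    show z / 2 + w / 2 = (z + w) / 2 by ring] at h
  linarith

lemma cont_integrand (u v : ℝ → ℝ) (hu : Continuous u) (hv : Continuous v) :
    Continuous (fun p : ℝ × ℝ => Real.sqrt ((u p.1) ^ 2 + (v p.2) ^ 2)) :=
  (((hu.comp continuous_fst).pow 2).add ((hv.comp continuous_snd).pow 2)).sqrt

lemma cont_inner (L : ℝ) (u v : ℝ → ℝ) (hu : Continuous u) (hv : Continuous v) :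
    Continuous (fun ry => ∫ rx in (-L)..L, Real.sqrt ((u ry) ^ 2 + (v rx) ^ 2)) := by
  apply continuous_parametric_intervalIntegral_of_continuous'
    (f := fun ry rx => Real.sqrt ((u ry) ^ 2 + (v rx) ^ 2))
  exact cont_integrand u v hu hv

/-- Midpoint convexity of the double integral. -/
lemma J_mid (L T : ℝ) (hL : -L ≤ L) (hT : -T ≤ T)
    (u u₁ u₂ v v₁ v₂ : ℝ → ℝ)
    (hu₁ : Continuous u₁) (hu₂ : Continuous u₂)
    (hv₁ : Continuous v₁) (hv₂ : Continuous v₂)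
    (hu : ∀ r, u r = (u₁ r + u₂ r) / 2) (hv : ∀ r, v r = (v₁ r + v₂ r) / 2) :
    (∫ ry in (-T)..T, ∫ rx in (-L)..L, Real.sqrt ((u ry) ^ 2 + (v rx) ^ 2))
      ≤ ((∫ ry in (-T)..T, ∫ rx in (-L)..L, Real.sqrt ((u₁ ry) ^ 2 + (v₁ rx) ^ 2))
        + ∫ ry in (-T)..T, ∫ rx in (-L)..L, Real.sqrt ((u₂ ry) ^ 2 + (v₂ rx) ^ 2)) / 2 := by
  have hucont : Continuous u := by
    have : u = fun r => (u₁ r + u₂ r) / 2 := funext hu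
    rw [this]; fun_prop
  have hvcont : Continuous v := by
    have : v = fun r => (v₁ r + v₂ r) / 2 := funext hv
    rw [this]; fun_prop
  have int1 : ∀ ry : ℝ, IntervalIntegrable
      (fun rx => Real.sqrt ((u₁ ry) ^ 2 + (v₁ rx) ^ 2)) volume (-L) L := fun ry =>
    (((continuous_const.pow 2).add ((hv₁.pow 2))).sqrt).intervalIntegrable _ _
  have int2 : ∀ ry : ℝ, IntervalIntegrable
      (fun rx => Real.sqrt ((u₂ ry) ^ 2 + (v₂ rx) ^ 2)) volume (-L) L := fun ry =>
    (((continuous_const.pow 2).add ((hv₂.pow 2))).sqrt).intervalIntegrable _ _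
  have intm : ∀ ry : ℝ, IntervalIntegrable
      (fun rx => Real.sqrt ((u ry) ^ 2 + (v rx) ^ 2)) volume (-L) L := fun ry =>
    (((continuous_const.pow 2).add ((hvcont.pow 2))).sqrt).intervalIntegrable _ _
  have inner_le : ∀ ry : ℝ,
      (∫ rx in (-L)..L, Real.sqrt ((u ry) ^ 2 + (v rx) ^ 2))
        ≤ ((∫ rx in (-L)..L, Real.sqrt ((u₁ ry) ^ 2 + (v₁ rx) ^ 2))
          + ∫ rx in (-L)..L, Real.sqrt ((u₂ ry) ^ 2 + (v₂ rx) ^ 2)) / 2 := by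
    intro ry
    have step : (∫ rx in (-L)..L, Real.sqrt ((u ry) ^ 2 + (v rx) ^ 2))
        ≤ ∫ rx in (-L)..L, (Real.sqrt ((u₁ ry) ^ 2 + (v₁ rx) ^ 2)
            + Real.sqrt ((u₂ ry) ^ 2 + (v₂ rx) ^ 2)) / 2 := by
      apply integral_mono hL (intm ry) (((int1 ry).add (int2 ry)).div_const 2)
      intro rx
      simp only [hu, hv]
      exact sqrt_mid _ _ _ _
    calc (∫ rx in (-L)..L, Real.sqrt ((u ry) ^ 2 + (v rx) ^ 2)) ≤ _ := step
      _ = ((∫ rx in (-L)..L, Real.sqrt ((u₁ ry) ^ 2 + (v₁ rx) ^ 2))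
          + ∫ rx in (-L)..L, Real.sqrt ((u₂ ry) ^ 2 + (v₂ rx) ^ 2)) / 2 := by
        rw [intervalIntegral.integral_div, integral_add (int1 ry) (int2 ry)]
  have I1 : IntervalIntegrable
      (fun ry => ∫ rx in (-L)..L, Real.sqrt ((u₁ ry) ^ 2 + (v₁ rx) ^ 2)) volume (-T) T :=
    (cont_inner L u₁ v₁ hu₁ hv₁).intervalIntegrable _ _
  have I2 : IntervalIntegrable
      (fun ry => ∫ rx in (-L)..L, Real.sqrt ((u₂ ry) ^ 2 + (v₂ rx) ^ 2)) volume (-T) T :=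
    (cont_inner L u₂ v₂ hu₂ hv₂).intervalIntegrable _ _
  have Im : IntervalIntegrable
      (fun ry => ∫ rx in (-L)..L, Real.sqrt ((u ry) ^ 2 + (v rx) ^ 2)) volume (-T) T :=
    (cont_inner L u v hucont hvcont).intervalIntegrable _ _
  have step2 : (∫ ry in (-T)..T, ∫ rx in (-L)..L, Real.sqrt ((u ry) ^ 2 + (v rx) ^ 2))
      ≤ ∫ ry in (-T)..T, ((∫ rx in (-L)..L, Real.sqrt ((u₁ ry) ^ 2 + (v₁ rx) ^ 2))
          + ∫ rx in (-L)..L, Real.sqrt ((u₂ ry) ^ 2 + (v₂ rx) ^ 2)) / 2 :=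
    integral_mono hT Im ((I1.add I2).div_const 2) inner_le
  calc _ ≤ _ := step2
    _ = _ := by rw [intervalIntegral.integral_div, integral_add I1 I2]

/-- Reflection symmetry of the double integral. -/
lemma J_symm (L T : ℝ) (u₁ v₁ u₂ v₂ : ℝ → ℝ)
    (hu : ∀ r, (u₁ (-r)) ^ 2 = (u₂ r) ^ 2) (hv : ∀ r, (v₁ (-r)) ^ 2 = (v₂ r) ^ 2) :
    (∫ ry in (-T)..T, ∫ rx in (-L)..L, Real.sqrt ((u₁ ry) ^ 2 + (v₁ rx) ^ 2))
      = ∫ ry in (-T)..T, ∫ rx in (-L)..L, Real.sqrt ((u₂ ry) ^ 2 + (v₂ rx) ^ 2) := by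
  have hinner : ∀ c : ℝ, (∫ rx in (-L)..L, Real.sqrt (c + (v₁ rx) ^ 2))
      = ∫ rx in (-L)..L, Real.sqrt (c + (v₂ rx) ^ 2) := by
    intro c
    have h := intervalIntegral.integral_comp_neg (a := -L) (b := L)
      (fun rx => Real.sqrt (c + (v₁ rx) ^ 2))
    rw [neg_neg] at h
    rw [← h]
    apply intervalIntegral.integral_congr
    intro x _
    simp [hv x]
  have houter := intervalIntegral.integral_comp_neg (a := -T) (b := T)
    (fun ry => ∫ rx in (-L)..L, Real.sqrt ((u₁ ry) ^ 2 + (v₁ rx) ^ 2))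
  rw [neg_neg] at houter
  rw [← houter]
  apply intervalIntegral.integral_congr
  intro ry _
  simp only
  rw [hu ry, hinner ((u₂ ry) ^ 2)]

lemma integral_abs (L : ℝ) (hL : 0 ≤ L) : (∫ x in (-L)..L, |x|) = L ^ 2 := by
  have hi : ∀ a b : ℝ, IntervalIntegrable (fun x : ℝ => |x|) volume a b := fun a b =>
    continuous_abs.intervalIntegrable _ _
  have h1 : (∫ x in (0:ℝ)..L, |x|) = L ^ 2 / 2 := by
    rw [intervalIntegral.integral_congr (g := fun x => x)
      (fun x hx => abs_of_nonneg (by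
        rcases hx with ⟨h1', h2'⟩
        simp only [min_def] at h1'
        split_ifs at h1' <;> linarith)), integral_id]
    ring
  have h2 : (∫ x in (-L)..(0:ℝ), |x|) = L ^ 2 / 2 := by
    rw [intervalIntegral.integral_congr (g := fun x => -x)
      (fun x hx => abs_of_nonpos (by
        rcases hx with ⟨h1', h2'⟩
        simp only [max_def] at h2'
        split_ifs at h2' <;> linarith)), intervalIntegral.integral_neg, integral_id]
    ring
  rw [← intervalIntegral.integral_add_adjacent_intervals (a := -L) (b := 0) (c := L)
    (hi _ _) (hi _ _), h1, h2]
  ring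

/-- Coercivity lower bound for the double integral. -/
lemma J_lower (L T e : ℝ) (hL : 0 < L) (hT : 0 < T) (u : ℝ → ℝ) (hu : Continuous u) :
    2 * T * L ^ 2 * |e|
      ≤ ∫ ry in (-T)..T, ∫ rx in (-L)..L, Real.sqrt ((u ry) ^ 2 + (0 + rx * e) ^ 2) := by
  have hL' : -L ≤ L := by linarith
  have hT' : -T ≤ T := by linarith
  have pt : ∀ ry rx : ℝ, |rx| * |e| ≤ Real.sqrt ((u ry) ^ 2 + (0 + rx * e) ^ 2) := by
    intro ry rx
    calc |rx| * |e| = |rx * e| := (abs_mul _ _).symm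
      _ = Real.sqrt ((rx * e) ^ 2) := (Real.sqrt_sq_eq_abs _).symm
      _ ≤ Real.sqrt ((u ry) ^ 2 + (0 + rx * e) ^ 2) :=
        Real.sqrt_le_sqrt (by nlinarith [sq_nonneg (u ry)])
  have hcv : Continuous (fun rx : ℝ => 0 + rx * e) := by fun_prop
  have inner_ge : ∀ ry : ℝ,
      L ^ 2 * |e| ≤ ∫ rx in (-L)..L, Real.sqrt ((u ry) ^ 2 + (0 + rx * e) ^ 2) := by
    intro ry
    have : (∫ rx in (-L)..L, |rx| * |e|)
        ≤ ∫ rx in (-L)..L, Real.sqrt ((u ry) ^ 2 + (0 + rx * e) ^ 2) := by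
      apply intervalIntegral.integral_mono hL'
        ((continuous_abs.mul continuous_const).intervalIntegrable _ _)
        ((((continuous_const.pow 2).add (hcv.pow 2)).sqrt).intervalIntegrable _ _)
      intro rx
      exact pt ry rx
    calc L ^ 2 * |e| = ∫ rx in (-L)..L, |rx| * |e| := by
          rw [intervalIntegral.integral_mul_const, integral_abs L hL.le]
      _ ≤ _ := this
  calc 2 * T * L ^ 2 * |e| = ∫ _ry in (-T)..T, L ^ 2 * |e| := by
        rw [intervalIntegral.integral_const]; simp; ring
    _ ≤ _ := by
        apply intervalIntegral.integral_mono hT' (intervalIntegrable_const)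
        · exact (cont_inner L u (fun rx => 0 + rx * e) hu hcv).intervalIntegrable _ _
        · exact inner_ge

end FlatDAux

/-- there is a global minimizer with forward velocity the average of the
track speeds and zero lateral velocity. -/
theorem flatD_min_forward_average (L T W : ℝ) (hL : 0 < L) (hT : 0 < T) (hW : 0 < W)
    (Sr Sl : ℝ) :
    ∃ td : ℝ, ∀ a b e : ℝ,
      flatD L T W ((Sr + Sl) / 2) 0 td Sr Sl ≤ flatD L T W a b e Sr Sl := by
  classical
  open FlatDAux in
  set g : ℝ → ℝ := fun e => flatD L T W ((Sr + Sl) / 2) 0 e Sr Sl with hgdef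
  have hL' : -L ≤ L := by linarith
  have hT' : -T ≤ T := by linarith
  -- continuity of g
  have hgcont : Continuous g := by
    have c1 : Continuous (fun p : ℝ × ℝ =>
        ∫ rx in (-L)..L, Real.sqrt (((Sr + Sl) / 2 + (W - p.2) * p.1 - Sr) ^ 2
          + (0 + rx * p.1) ^ 2)) := by
      apply intervalIntegral.continuous_parametric_intervalIntegral_of_continuous'
      apply Continuous.sqrt
      fun_prop
    have c2 : Continuous (fun p : ℝ × ℝ =>
        ∫ rx in (-L)..L, Real.sqrt (((Sr + Sl) / 2 - (W + p.2) * p.1 - Sl) ^ 2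
          + (0 + rx * p.1) ^ 2)) := by
      apply intervalIntegral.continuous_parametric_intervalIntegral_of_continuous'
      apply Continuous.sqrt
      fun_prop
    apply Continuous.add
    · exact intervalIntegral.continuous_parametric_intervalIntegral_of_continuous'
        (f := fun e ry => ∫ rx in (-L)..L,
          Real.sqrt (((Sr + Sl) / 2 + (W - ry) * e - Sr) ^ 2 + (0 + rx * e) ^ 2)) c1 _ _
    · exact intervalIntegral.continuous_parametric_intervalIntegral_of_continuous'
        (f := fun e ly => ∫ lx in (-L)..L,
          Real.sqrt (((Sr + Sl) / 2 - (W + ly) * e - Sl) ^ 2 + (0 + lx * e) ^ 2)) c2 _ _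
  -- coercivity of g
  have hglb : ∀ e : ℝ, 2 * T * L ^ 2 * |e| ≤ g e := by
    intro e
    have h1 := FlatDAux.J_lower L T e hL hT
      (fun ry => (Sr + Sl) / 2 + (W - ry) * e - Sr) (by fun_prop)
    have h2 : (0:ℝ) ≤ ∫ ly in (-T)..T, ∫ lx in (-L)..L,
        Real.sqrt (((Sr + Sl) / 2 - (W + ly) * e - Sl) ^ 2 + (0 + lx * e) ^ 2) := by
      apply intervalIntegral.integral_nonneg hT'
      intro ly _
      apply intervalIntegral.integral_nonneg hL'
      intro lx _
      exact Real.sqrt_nonneg _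
    show 2 * T * L ^ 2 * |e| ≤ _ + _
    linarith
  set M : ℝ := 2 * T * L ^ 2 with hM
  have hMpos : 0 < M := by positivity
  set R : ℝ := |g 0| / M + 1 with hR
  have hRpos : 0 < R := by positivity
  have h0mem : (0:ℝ) ∈ Set.Icc (-R) R := ⟨by linarith, by linarith⟩
  obtain ⟨td, htdmem, htd⟩ := (isCompact_Icc (a := -R) (b := R)).exists_isMinOn
    ⟨0, h0mem⟩ hgcont.continuousOn
  refine ⟨td, fun a b e => ?_⟩
  -- g td ≤ g e
  have hge : g td ≤ g e := by
    by_cases he : e ∈ Set.Icc (-R) R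
    · exact htd he
    · have h0 : g td ≤ g 0 := htd h0mem
      have hRe : R < |e| := by
        simp only [Set.mem_Icc, not_and_or, not_le] at he
        rcases he with h | h
        · rw [abs_of_neg (by linarith)]; linarith
        · rw [abs_of_pos (by linarith)]; linarith
      have hbig := hglb e
      have hMR : |g 0| < M * R := by
        rw [hR, mul_add, mul_div_cancel₀ _ (ne_of_gt hMpos)]
        linarith
      have : g 0 ≤ |g 0| := le_abs_self _
      nlinarith
  -- g e ≤ flatD a b e via symmetry + midpoint convexity
  have hsym : flatD L T W (Sr + Sl - a) (-b) e Sr Sl = flatD L T W a b e Sr Sl := by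
    show (_ + _ : ℝ) = _ + _
    have e1 : (∫ ry in (-T)..T, ∫ rx in (-L)..L,
        Real.sqrt (((Sr + Sl - a) + (W - ry) * e - Sr) ^ 2 + ((-b) + rx * e) ^ 2))
        = ∫ ly in (-T)..T, ∫ lx in (-L)..L,
        Real.sqrt ((a - (W + ly) * e - Sl) ^ 2 + (b + lx * e) ^ 2) :=
      FlatDAux.J_symm L T
        (fun ry => (Sr + Sl - a) + (W - ry) * e - Sr) (fun rx => (-b) + rx * e)
        (fun ly => a - (W + ly) * e - Sl) (fun lx => b + lx * e)
        (fun r => by ring) (fun r => by ring)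
    have e2 : (∫ ly in (-T)..T, ∫ lx in (-L)..L,
        Real.sqrt (((Sr + Sl - a) - (W + ly) * e - Sl) ^ 2 + ((-b) + lx * e) ^ 2))
        = ∫ ry in (-T)..T, ∫ rx in (-L)..L,
        Real.sqrt ((a + (W - ry) * e - Sr) ^ 2 + (b + rx * e) ^ 2) :=
      FlatDAux.J_symm L T
        (fun ly => (Sr + Sl - a) - (W + ly) * e - Sl) (fun lx => (-b) + lx * e)
        (fun ry => a + (W - ry) * e - Sr) (fun rx => b + rx * e)
        (fun r => by ring) (fun r => by ring)
    rw [e1, e2]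
    exact add_comm _ _
  have hmid : g e ≤ (flatD L T W a b e Sr Sl + flatD L T W (Sr + Sl - a) (-b) e Sr Sl) / 2 := by
    have m1 : (∫ ry in (-T)..T, ∫ rx in (-L)..L,
        Real.sqrt (((Sr + Sl) / 2 + (W - ry) * e - Sr) ^ 2 + (0 + rx * e) ^ 2))
        ≤ ((∫ ry in (-T)..T, ∫ rx in (-L)..L,
            Real.sqrt ((a + (W - ry) * e - Sr) ^ 2 + (b + rx * e) ^ 2))
          + ∫ ry in (-T)..T, ∫ rx in (-L)..L,
            Real.sqrt (((Sr + Sl - a) + (W - ry) * e - Sr) ^ 2 + ((-b) + rx * e) ^ 2)) / 2 :=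
      FlatDAux.J_mid L T hL' hT'
        (fun ry => (Sr + Sl) / 2 + (W - ry) * e - Sr)
        (fun ry => a + (W - ry) * e - Sr)
        (fun ry => (Sr + Sl - a) + (W - ry) * e - Sr)
        (fun rx => 0 + rx * e) (fun rx => b + rx * e) (fun rx => (-b) + rx * e)
        (by fun_prop) (by fun_prop) (by fun_prop) (by fun_prop)
        (fun r => by ring) (fun r => by ring)
    have m2 : (∫ ly in (-T)..T, ∫ lx in (-L)..L,
        Real.sqrt (((Sr + Sl) / 2 - (W + ly) * e - Sl) ^ 2 + (0 + lx * e) ^ 2))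
        ≤ ((∫ ly in (-T)..T, ∫ lx in (-L)..L,
            Real.sqrt ((a - (W + ly) * e - Sl) ^ 2 + (b + lx * e) ^ 2))
          + ∫ ly in (-T)..T, ∫ lx in (-L)..L,
            Real.sqrt (((Sr + Sl - a) - (W + ly) * e - Sl) ^ 2 + ((-b) + lx * e) ^ 2)) / 2 :=
      FlatDAux.J_mid L T hL' hT'
        (fun ly => (Sr + Sl) / 2 - (W + ly) * e - Sl)
        (fun ly => a - (W + ly) * e - Sl)
        (fun ly => (Sr + Sl - a) - (W + ly) * e - Sl)
        (fun lx => 0 + lx * e) (fun lx => b + lx * e) (fun lx => (-b) + lx * e)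
        (by fun_prop) (by fun_prop) (by fun_prop) (by fun_prop)
        (fun r => by ring) (fun r => by ring)
    show (_ + _ : ℝ) ≤ ((_ + _) + (_ + _)) / 2
    linarith
  have : g e ≤ flatD L T W a b e Sr Sl := by
    rw [hsym] at hmid
    linarith
  exact le_trans hge this
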